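/- Let n, p, k be integers with 0 ≤ k < p−1, p < n and n−p+k > p, and suppose that k and n−p are even. Let σ_n : ℝ^n → ℝ^n be the involution that negates the coordinates u_1,…,u_k and u_{p+1},…,u_n: σ_n(u) = (−u_1,…,−u_k, u_{k+1},…,u_p, −u_{p+1},…,−u_n). Then σ_n maps R(n,p,k) onto itself, and its restriction to R(n,p,k) is isotopic to the identity: there is a continuous map H : R(n,p,k) × [0,1] → R(n,p,k) with H(u,0) = u and H(u,1) = σ_n(u) for all u, such that for every t ∈ [0,1] the map u ↦ H(u,t) is a homeomorphism of R(n,p,k). -/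

import Mathlib

open Metric

/-- The intersection of two quadrics in ℝⁿ associated to the polytope `P_k`:
`u₁² + ⋯ + u_p² = p` and `u₁² + ⋯ + u_k² + u_{p+1}² + ⋯ + u_n² = n - p + k`. -/
def quadR (n p k : ℕ) : Set (EuclideanSpace ℝ (Fin n)) :=
  {u | (∑ j : Fin n, if (j : ℕ) < p then u j ^ 2 else 0) = (p : ℝ) ∧
       (∑ j : Fin n, if (j : ℕ) < k ∨ p ≤ (j : ℕ) then u j ^ 2 else 0) = (n : ℝ) - p + k}

/-- The involution of ℝⁿ negating the coordinates `u₁, …, u_k` and `u_{p+1}, …, u_n`. -/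
def sigmaN (n p k : ℕ) : EuclideanSpace ℝ (Fin n) → EuclideanSpace ℝ (Fin n) :=
  fun u => WithLp.toLp 2 (fun j : Fin n => if (j : ℕ) < k ∨ p ≤ (j : ℕ) then -u j else u j)

namespace Stmt3Aux

/-- partner index for the pairwise rotation -/
def nxt (p k j : ℕ) : ℕ :=
  if j < k then (if j % 2 = 0 then j + 1 else j - 1)
  else if p ≤ j then (if (j + p) % 2 = 0 then j + 1 else j - 1)
  else j

/-- sign for the pairwise rotation -/
noncomputable def sg (p k j : ℕ) : ℝ :=
  if j < k then (if j % 2 = 0 then -1 else 1)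
  else if p ≤ j then (if (j + p) % 2 = 0 then -1 else 1)
  else 0

variable {n p k : ℕ}

section lems
variable (hkp : k + 1 < p) (hpn : p < n) (hk : k % 2 = 0) (hn : n % 2 = p % 2)
include hkp hpn hk hn

set_option linter.unusedSectionVars false in
lemma nxt_lt {j : ℕ} (hj : j < n) : nxt p k j < n := by
  unfold nxt; split_ifs <;> omega

set_option linter.unusedSectionVars false in
lemma nxt_nxt {j : ℕ} (hj : j < n) : nxt p k (nxt p k j) = j := by
  simp only [nxt]; split_ifs <;> omega

set_option linter.unusedSectionVars false in
lemma nxt_reg {j : ℕ} (hj : j < n) : (nxt p k j < k ∨ p ≤ nxt p k j) ↔ (j < k ∨ p ≤ j) := by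
  simp only [nxt]; split_ifs <;> omega

set_option linter.unusedSectionVars false in
lemma nxt_lt_p {j : ℕ} (hj : j < n) : nxt p k j < p ↔ j < p := by
  simp only [nxt]; split_ifs <;> omega

set_option linter.unusedSectionVars false in
lemma nxt_ne {j : ℕ} (hj : j < n) (hr : j < k ∨ p ≤ j) : nxt p k j ≠ j := by
  simp only [nxt]; rcases hr with h | h <;> split_ifs <;> omega

set_option linter.unusedSectionVars false in
lemma sg_nxt {j : ℕ} (hj : j < n) : sg p k (nxt p k j) = - sg p k j := by
  simp only [nxt, sg]; split_ifs <;> first | (exfalso; omega) | norm_num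

end lems

lemma nxt_id {j : ℕ} (hr : ¬(j < k ∨ p ≤ j)) : nxt p k j = j := by
  simp only [nxt]; split_ifs <;> omega

lemma sg_zero {j : ℕ} (hr : ¬(j < k ∨ p ≤ j)) : sg p k j = 0 := by
  simp only [sg]; split_ifs <;> first | rfl | (exfalso; omega)

lemma sg_sq {j : ℕ} (hr : j < k ∨ p ≤ j) : sg p k j * sg p k j = 1 := by
  simp only [sg]; rcases hr with h | h <;> split_ifs <;> first | (exfalso; omega) | norm_num

/-- partner as a map `Fin n → Fin n` -/
def invF (n p k : ℕ) (j : Fin n) : Fin n := ⟨nxt p k j % n, Nat.mod_lt _ j.pos⟩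

/-- the coordinatewise rotation by angle θ -/
noncomputable def rot (n p k : ℕ) (θ : ℝ) (u : EuclideanSpace ℝ (Fin n)) :
    EuclideanSpace ℝ (Fin n) :=
  WithLp.toLp 2 (fun j : Fin n => if (j : ℕ) < k ∨ p ≤ (j : ℕ) then
      Real.cos θ * u j + sg p k j * Real.sin θ * u (invF n p k j)
    else u j)

section lems2
variable (hkp : k + 1 < p) (hpn : p < n) (hk : k % 2 = 0) (hn : n % 2 = p % 2)
include hkp hpn hk hn

lemma invF_coe (j : Fin n) : (invF n p k j : ℕ) = nxt p k (j : ℕ) := by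
  simp only [invF]
  exact Nat.mod_eq_of_lt (nxt_lt hkp hpn hk hn j.isLt)

lemma invF_invol : Function.Involutive (invF n p k) := by
  intro j
  apply Fin.ext
  rw [invF_coe hkp hpn hk hn, invF_coe hkp hpn hk hn]
  exact nxt_nxt hkp hpn hk hn j.isLt

lemma invF_id {j : Fin n} (hr : ¬((j : ℕ) < k ∨ p ≤ (j : ℕ))) : invF n p k j = j := by
  apply Fin.ext
  rw [invF_coe hkp hpn hk hn, nxt_id hr]

lemma sg_invF (j : Fin n) : sg p k ((invF n p k j : Fin n) : ℕ) = - sg p k (j : ℕ) := by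
  rw [invF_coe hkp hpn hk hn]; exact sg_nxt hkp hpn hk hn j.isLt

lemma sq_rot (θ : ℝ) (u : EuclideanSpace ℝ (Fin n)) (j : Fin n) :
    (rot n p k θ u j) ^ 2 =
      Real.cos θ ^ 2 * (u j) ^ 2 + Real.sin θ ^ 2 * (u (invF n p k j)) ^ 2 +
        (2 * Real.cos θ * Real.sin θ) * (sg p k (j : ℕ) * (u j * u (invF n p k j))) := by
  by_cases hr : (j : ℕ) < k ∨ p ≤ (j : ℕ)
  · have hs := sg_sq (p := p) (k := k) hr
    simp only [rot, PiLp.toLp_apply, if_pos hr]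
    linear_combination (Real.sin θ) ^ 2 * (u (invF n p k j)) ^ 2 * hs
  · have hs := sg_zero (p := p) (k := k) hr
    rw [invF_id hkp hpn hk hn hr]
    simp only [rot, PiLp.toLp_apply, if_neg hr, hs]
    linear_combination (-(u j) ^ 2) * (Real.sin_sq_add_cos_sq θ)

lemma sum_rot (θ : ℝ) (u : EuclideanSpace ℝ (Fin n)) (c : ℕ → Prop) [DecidablePred c]
    (hc : ∀ j < n, (c (nxt p k j) ↔ c j)) :
    ∑ j : Fin n, (if c (j : ℕ) then (rot n p k θ u j) ^ 2 else 0)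
      = ∑ j : Fin n, (if c (j : ℕ) then (u j) ^ 2 else 0) := by
  have hcF : ∀ j : Fin n, c ((invF n p k j : Fin n) : ℕ) ↔ c (j : ℕ) := by
    intro j; rw [invF_coe hkp hpn hk hn]; exact hc _ j.isLt
  have step1 : ∑ j : Fin n, (if c (j : ℕ) then (rot n p k θ u j) ^ 2 else 0)
      = ∑ j : Fin n, (Real.cos θ ^ 2 * (if c (j : ℕ) then (u j) ^ 2 else 0)
          + Real.sin θ ^ 2 * (if c (j : ℕ) then (u (invF n p k j)) ^ 2 else 0)
          + (2 * Real.cos θ * Real.sin θ) *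
              (if c (j : ℕ) then sg p k (j : ℕ) * (u j * u (invF n p k j)) else 0)) := by
    refine Finset.sum_congr rfl fun j _ => ?_
    rw [sq_rot hkp hpn hk hn]
    by_cases hcj : c (j : ℕ) <;> simp [hcj]
  rw [step1, Finset.sum_add_distrib, Finset.sum_add_distrib, ← Finset.mul_sum, ← Finset.mul_sum,
    ← Finset.mul_sum]
  have h2 : ∑ j : Fin n, (if c (j : ℕ) then (u (invF n p k j)) ^ 2 else 0)
      = ∑ j : Fin n, (if c (j : ℕ) then (u j) ^ 2 else 0) := by
    have := Equiv.sum_comp ((invF_invol hkp hpn hk hn).toPerm)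
      (fun j : Fin n => if c (j : ℕ) then (u j) ^ 2 else 0)
    rw [← this]
    refine Finset.sum_congr rfl fun j _ => ?_
    simp only [Function.Involutive.coe_toPerm]
    by_cases hcj : c (j : ℕ)
    · rw [if_pos hcj]; exact (if_pos ((hcF j).mpr hcj)).symm
    · rw [if_neg hcj]; exact (if_neg (fun hh => hcj ((hcF j).mp hh))).symm
  have h3 : ∑ j : Fin n, (if c (j : ℕ) then sg p k (j : ℕ) * (u j * u (invF n p k j)) else 0)
      = 0 := by
    refine Finset.sum_involution (fun j _ => invF n p k j) ?_ ?_ (fun j _ => Finset.mem_univ _) ?_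
    · intro j _
      beta_reduce
      by_cases hcj : c (j : ℕ)
      · rw [if_pos hcj, if_pos ((hcF j).mpr hcj)]
        by_cases hr : (j : ℕ) < k ∨ p ≤ (j : ℕ)
        · rw [invF_invol hkp hpn hk hn j, sg_invF hkp hpn hk hn j]; ring
        · rw [invF_id hkp hpn hk hn hr, sg_zero hr]; ring
      · rw [if_neg hcj, if_neg (fun hh => hcj ((hcF j).mp hh)), add_zero]
    · intro j _ hf
      beta_reduce
      beta_reduce at hf
      have hr : (j : ℕ) < k ∨ p ≤ (j : ℕ) := by
        by_contra hr
        apply hf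
        rw [sg_zero hr]
        simp
      intro he
      have h0 : invF n p k j = j := he
      have h1 : (invF n p k j : ℕ) = (j : ℕ) := congrArg Fin.val h0
      rw [invF_coe hkp hpn hk hn] at h1
      exact nxt_ne hkp hpn hk hn j.isLt hr h1
    · intro j _; beta_reduce; exact invF_invol hkp hpn hk hn j
  rw [h2, h3, mul_zero, add_zero]
  linear_combination (∑ j : Fin n, (if c (j : ℕ) then (u j) ^ 2 else 0)) *
    (Real.sin_sq_add_cos_sq θ)

lemma rot_mem (θ : ℝ) {u : EuclideanSpace ℝ (Fin n)} (hu : u ∈ quadR n p k) :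
    rot n p k θ u ∈ quadR n p k := by
  obtain ⟨h1, h2⟩ := hu
  constructor
  · rw [sum_rot hkp hpn hk hn θ u (fun m => m < p) (fun j hj => nxt_lt_p hkp hpn hk hn hj)]
    exact h1
  · rw [sum_rot hkp hpn hk hn θ u (fun m => m < k ∨ p ≤ m) (fun j hj => nxt_reg hkp hpn hk hn hj)]
    exact h2

lemma rot_rot (θ : ℝ) (u : EuclideanSpace ℝ (Fin n)) :
    rot n p k (-θ) (rot n p k θ u) = u := by
  ext j
  by_cases hr : (j : ℕ) < k ∨ p ≤ (j : ℕ)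
  · have hr' : ((invF n p k j : Fin n) : ℕ) < k ∨ p ≤ ((invF n p k j : Fin n) : ℕ) := by
      rw [invF_coe hkp hpn hk hn]
      exact (nxt_reg hkp hpn hk hn j.isLt).mpr hr
    have hs := sg_sq (p := p) (k := k) hr
    show (if (j : ℕ) < k ∨ p ≤ (j : ℕ) then _ else _) = u j
    rw [if_pos hr]
    simp only [rot, if_pos hr, if_pos hr', Real.cos_neg, Real.sin_neg]
    rw [invF_invol hkp hpn hk hn j, sg_invF hkp hpn hk hn j]
    linear_combination (Real.sin θ) ^ 2 * (u j) * hs + (u j) * (Real.sin_sq_add_cos_sq θ)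
  · show (if (j : ℕ) < k ∨ p ≤ (j : ℕ) then _ else rot n p k θ u j) = u j
    rw [if_neg hr]
    simp only [rot, if_neg hr]

end lems2

lemma rot_zero (u : EuclideanSpace ℝ (Fin n)) : rot n p k 0 u = u := by
  ext j
  show (if (j : ℕ) < k ∨ p ≤ (j : ℕ) then _ else u j) = u j
  split_ifs with hr
  · simp
  · rfl

lemma rot_pi (u : EuclideanSpace ℝ (Fin n)) : rot n p k Real.pi u = sigmaN n p k u := by
  ext j
  simp only [rot, sigmaN, PiLp.toLp_apply]
  split_ifs with hr
  · simp
  · rfl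

lemma sigmaN_invol (u : EuclideanSpace ℝ (Fin n)) : sigmaN n p k (sigmaN n p k u) = u := by
  ext j
  simp only [sigmaN, PiLp.toLp_apply]
  split_ifs with hr <;> simp

lemma rot_cont2 {X : Type} [TopologicalSpace X]
    {f : X → EuclideanSpace ℝ (Fin n)} {g : X → ℝ}
    (hf : Continuous f) (hg : Continuous g) :
    Continuous fun x => rot n p k (g x) (f x) := by
  refine (PiLp.continuous_toLp 2 (fun _ : Fin n => ℝ)).comp (f := fun x j => rot n p k (g x) (f x) j) ?_
  apply continuous_pi
  intro j
  simp only [rot, PiLp.toLp_apply]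
  have hfj : Continuous fun x => f x j := by fun_prop
  have hfj' : Continuous fun x => f x (invF n p k j) := by fun_prop
  split_ifs <;> fun_prop

end Stmt3Aux

open Stmt3Aux

set_option maxHeartbeats 1000000 in
/-- If `k` and `n - p` are even, then `σ_n` maps `R(n,p,k)` onto itself and its restriction to
`R(n,p,k)` is isotopic to the identity. -/
theorem stmt3 (n p k : ℕ) (hkp : k + 1 < p) (hpn : p < n) (h : 2 * p < n + k)
    (hke : Even k) (hnpe : Even (n - p)) :
    sigmaN n p k '' quadR n p k = quadR n p k ∧
    ∃ H : quadR n p k × unitInterval → quadR n p k,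
      Continuous H ∧
      (∀ u : quadR n p k, H (u, 0) = u) ∧
      (∀ u : quadR n p k, (H (u, 1) : EuclideanSpace ℝ (Fin n)) = sigmaN n p k u) ∧
      (∀ t : unitInterval, IsHomeomorph (fun u : quadR n p k => H (u, t))) := by
  have hk : k % 2 = 0 := Nat.even_iff.mp hke
  have hn : n % 2 = p % 2 := by obtain ⟨r, hr⟩ := hnpe; omega
  constructor
  · ext x
    constructor
    · rintro ⟨u, hu, rfl⟩
      rw [← rot_pi]
      exact rot_mem hkp hpn hk hn _ hu
    · intro hx
      refine ⟨sigmaN n p k x, ?_, sigmaN_invol x⟩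
      rw [← rot_pi]
      exact rot_mem hkp hpn hk hn _ hx
  · refine ⟨fun x => ⟨rot n p k (Real.pi * (x.2 : ℝ)) (x.1 : EuclideanSpace ℝ (Fin n)),
      rot_mem hkp hpn hk hn _ x.1.2⟩, ?_, ?_, ?_, ?_⟩
    · apply Continuous.subtype_mk
      exact rot_cont2 (by fun_prop) (by fun_prop)
    · intro u
      apply Subtype.ext
      show rot n p k (Real.pi * ((0 : unitInterval) : ℝ)) (u : EuclideanSpace ℝ (Fin n)) = u
      rw [show Real.pi * ((0 : unitInterval) : ℝ) = 0 by norm_num, rot_zero]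
    · intro u
      show rot n p k (Real.pi * ((1 : unitInterval) : ℝ)) (u : EuclideanSpace ℝ (Fin n))
        = sigmaN n p k u
      rw [show Real.pi * ((1 : unitInterval) : ℝ) = Real.pi by norm_num, rot_pi]
    · intro t
      have key : ∀ (θ : ℝ) (u : EuclideanSpace ℝ (Fin n)),
          rot n p k θ (rot n p k (-θ) u) = u := by
        intro θ u
        have h2 := rot_rot hkp hpn hk hn (-θ) u
        rwa [neg_neg] at h2
      let e : quadR n p k ≃ₜ quadR n p k :=
        { toFun := fun u => ⟨rot n p k (Real.pi * (t : ℝ)) (u : EuclideanSpace ℝ (Fin n)),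
            rot_mem hkp hpn hk hn _ u.2⟩
          invFun := fun u => ⟨rot n p k (-(Real.pi * (t : ℝ))) (u : EuclideanSpace ℝ (Fin n)),
            rot_mem hkp hpn hk hn _ u.2⟩
          left_inv := fun u => Subtype.ext (rot_rot hkp hpn hk hn (Real.pi * (t : ℝ)) u)
          right_inv := fun u => Subtype.ext (key (Real.pi * (t : ℝ)) u)
          continuous_toFun := by
            apply Continuous.subtype_mk
            exact rot_cont2 (by fun_prop) (by fun_prop)
          continuous_invFun := by
            apply Continuous.subtype_mk
            exact rot_cont2 (by fun_prop) (by fun_prop) }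
      exact e.isHomeomorph
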